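/- Let φ : X → Y be a measurable mapping between σ-finite measure spaces satisfying the Luzin N⁻¹-property, 1 < p, r < ∞ and 1 ≤ q ≤ s ≤ ∞, and suppose φ induces a composition operator C_φ : L_{r,s}(Y) → L_{p,q}(X). Then C_φ is bounded below, i.e. there is a constant k > 0 with ‖f ∘ φ‖_{p,q} ≥ k‖f‖_{r,s} for every f ∈ L_{r,s}(Y), if and only if there is a constant k > 0 such that ∫_B J_{φ⁻¹}(y) dν(y) ≥ k^p (ν(B))^{p/r} for every measurable set B ∈ 𝓑. -/

import Mathlib

open MeasureTheory Set ENNReal NNReal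

/-- Distribution function `μ{x : |f(x)| > λ}` of a complex-valued function. -/
noncomputable def distribFn {X : Type*} [MeasurableSpace X] (μ : Measure X)
    (f : X → ℂ) (lam : ℝ) : ℝ≥0∞ :=
  μ {x | lam < ‖f x‖}

/-- The Lorentz `(p,q)`-norm, `1 < p < ∞`, `1 ≤ q ≤ ∞`, computed via the
distribution function. -/
noncomputable def lorentzNorm {X : Type*} [MeasurableSpace X] (μ : Measure X)
    (p : ℝ) (q : ℝ≥0∞) (f : X → ℂ) : ℝ≥0∞ :=
  if q = ∞ then ⨆ lam ∈ Set.Ioi (0 : ℝ), ENNReal.ofReal lam * (distribFn μ f lam) ^ (1 / p)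
  else (q * ∫⁻ lam in Set.Ioi (0 : ℝ),
      (ENNReal.ofReal lam * (distribFn μ f lam) ^ (1 / p)) ^ q.toReal /
        ENNReal.ofReal lam) ^ (1 / q.toReal)

/-- Membership in the Lorentz space `L_{p,q}`. -/
def MemLorentz {X : Type*} [MeasurableSpace X] (μ : Measure X)
    (p : ℝ) (q : ℝ≥0∞) (f : X → ℂ) : Prop :=
  Measurable f ∧ lorentzNorm μ p q f < ∞

lemma aux_lintegral_rpow {b c : ℝ} (hb : 0 < b) (hc : 0 ≤ c) :
    ∫⁻ x in Set.Ioc (0:ℝ) b, ENNReal.ofReal x ^ c = ENNReal.ofReal (b ^ (c+1) / (c+1)) := by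
  have h1 : ∫⁻ x in Set.Ioc (0:ℝ) b, ENNReal.ofReal x ^ c
      = ∫⁻ x in Set.Ioc (0:ℝ) b, ENNReal.ofReal (x ^ c) := by
    apply setLIntegral_congr_fun measurableSet_Ioc
    intro x hx
    dsimp only
    rw [ENNReal.ofReal_rpow_of_pos hx.1]
  have hint : IntervalIntegrable (fun x : ℝ => x ^ c) volume 0 b :=
    intervalIntegral.intervalIntegrable_rpow' (by linarith)
  have h2 : IntegrableOn (fun x : ℝ => x ^ c) (Set.Ioc 0 b) volume := by
    rwa [intervalIntegrable_iff_integrableOn_Ioc_of_le hb.le] at hint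
  rw [h1, ← ofReal_integral_eq_lintegral_ofReal h2]
  · congr 1
    rw [← intervalIntegral.integral_of_le hb.le, integral_rpow (Or.inl (by linarith)),
      Real.zero_rpow (by linarith), sub_zero]
  · filter_upwards [ae_restrict_mem measurableSet_Ioc] with x hx
    exact Real.rpow_nonneg hx.1.le c

lemma distribFn_indicator {Y : Type*} [MeasurableSpace Y] (ν : Measure Y) (B : Set Y)
    {lam : ℝ} (hlam : 0 < lam) :
    distribFn ν (B.indicator fun _ => (1:ℂ)) lam = if lam < 1 then ν B else 0 := by
  unfold distribFn
  have h : {y | lam < ‖B.indicator (fun _ => (1:ℂ)) y‖}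
      = if lam < 1 then B else ∅ := by
    ext y
    by_cases hy : y ∈ B
    · simp only [Set.mem_setOf_eq, Set.indicator_of_mem hy, norm_one]
      by_cases h1 : lam < 1 <;> simp [h1, hy]
    · simp only [Set.mem_setOf_eq, Set.indicator_of_notMem hy, norm_zero]
      by_cases h1 : lam < 1 <;> simp [h1, hy, not_lt.2 hlam.le]
  rw [h]
  split <;> simp

lemma lorentzNorm_indicator {Y : Type*} [MeasurableSpace Y] (ν : Measure Y) (B : Set Y)
    {r : ℝ} (hr : 1 < r) {s : ℝ≥0∞} (hs : 1 ≤ s) :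
    lorentzNorm ν r s (B.indicator fun _ => (1:ℂ)) = (ν B) ^ (1 / r) := by
  have hrinv : (0:ℝ) < 1 / r := by positivity
  by_cases hstop : s = ∞
  · rw [lorentzNorm, if_pos hstop]
    have hcong : ∀ lam ∈ Set.Ioi (0:ℝ),
        ENNReal.ofReal lam * (distribFn ν (B.indicator fun _ => (1:ℂ)) lam) ^ (1/r)
          = (if lam < 1 then ENNReal.ofReal lam else 0) * (ν B) ^ (1/r) := by
      intro lam hlam
      rw [distribFn_indicator ν B hlam]
      by_cases h1 : lam < 1
      · rw [if_pos h1, if_pos h1]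
      · rw [if_neg h1, if_neg h1, ENNReal.zero_rpow_of_pos hrinv, mul_zero, zero_mul]
    calc ⨆ lam ∈ Set.Ioi (0:ℝ),
        ENNReal.ofReal lam * (distribFn ν (B.indicator fun _ => (1:ℂ)) lam) ^ (1/r)
        = ⨆ lam ∈ Set.Ioi (0:ℝ),
            (if lam < 1 then ENNReal.ofReal lam else 0) * (ν B) ^ (1/r) :=
          biSup_congr hcong
      _ = (⨆ lam ∈ Set.Ioi (0:ℝ), (if lam < 1 then ENNReal.ofReal lam else 0)) * (ν B) ^ (1/r) := by
          rw [ENNReal.iSup_mul _ _]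
          exact iSup_congr fun lam => (ENNReal.iSup_mul _ _).symm
      _ = 1 * (ν B) ^ (1/r) := by
          congr 1
          apply le_antisymm
          · refine iSup₂_le fun lam _ => ?_
            split
            · exact ENNReal.ofReal_le_one.2 (by linarith)
            · exact zero_le_one
          · refine le_of_forall_lt fun x hx => ?_
            have hxt : x ≠ ∞ := hx.ne_top
            set t := x.toReal with ht
            have ht0 : 0 ≤ t := ENNReal.toReal_nonneg
            have ht1 : t < 1 := by
              rw [ht, ← ENNReal.toReal_one]
              exact ENNReal.toReal_strict_mono one_ne_top hx
            set lam := (t + 1) / 2 with hlamdef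
            have hlam0 : 0 < lam := by positivity
            have hlam1 : lam < 1 := by rw [hlamdef]; linarith
            have htlam : t < lam := by rw [hlamdef]; linarith
            have hofx : x < ENNReal.ofReal lam := by
              rw [← ENNReal.ofReal_toReal hxt]
              exact ENNReal.ofReal_lt_ofReal_iff hlam0 |>.2 htlam
            have hle : ENNReal.ofReal lam
                ≤ ⨆ l ∈ Set.Ioi (0:ℝ), (if l < 1 then ENNReal.ofReal l else 0) :=
              le_iSup₂_of_le lam hlam0 (le_of_eq (if_pos hlam1).symm)
            exact lt_of_lt_of_le hofx hle
      _ = (ν B) ^ (1/r) := one_mul _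
  · rw [lorentzNorm, if_neg hstop]
    set st := s.toReal with hstdef
    have hst1 : (1:ℝ) ≤ st := by
      rw [hstdef, ← ENNReal.toReal_one]
      exact ENNReal.toReal_mono hstop hs
    have hst0 : (0:ℝ) < st := by linarith
    have hcong : ∀ lam ∈ Set.Ioi (0:ℝ),
        (ENNReal.ofReal lam * (distribFn ν (B.indicator fun _ => (1:ℂ)) lam) ^ (1/r)) ^ st
            / ENNReal.ofReal lam
          = (Set.Iio (1:ℝ)).indicator (fun lam => ENNReal.ofReal lam ^ (st - 1)) lam
            * (ν B) ^ (st/r) := by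
      intro lam hlam
      rw [distribFn_indicator ν B hlam]
      have hne0 : ENNReal.ofReal lam ≠ 0 := by
        simp [ENNReal.ofReal_eq_zero, not_le, hlam.out]
      by_cases h1 : lam < 1
      · rw [if_pos h1, Set.indicator_of_mem (by exact h1)]
        rw [ENNReal.mul_rpow_of_nonneg _ _ hst0.le, ← ENNReal.rpow_mul,
          show (1/r) * st = st/r by ring]
        have hdiv : ENNReal.ofReal lam ^ st / ENNReal.ofReal lam
            = ENNReal.ofReal lam ^ (st - 1) := by
          rw [ENNReal.rpow_sub _ _ hne0 ENNReal.ofReal_ne_top, ENNReal.rpow_one]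
        rw [mul_comm (ENNReal.ofReal lam ^ st) ((ν B) ^ (st/r)), mul_div_assoc, hdiv,
          mul_comm]
      · rw [if_neg h1, Set.indicator_of_notMem (by exact h1),
          ENNReal.zero_rpow_of_pos hrinv, mul_zero, ENNReal.zero_rpow_of_pos hst0,
          ENNReal.zero_div, zero_mul]
    rw [setLIntegral_congr_fun measurableSet_Ioi
      hcong]
    rw [lintegral_mul_const _ ((ENNReal.measurable_ofReal.pow_const _).indicator
      measurableSet_Iio)]
    rw [lintegral_indicator measurableSet_Iio, Measure.restrict_restrict measurableSet_Iio,
      Set.Iio_inter_Ioi, Measure.restrict_congr_set Ioo_ae_eq_Ioc,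
      aux_lintegral_rpow one_pos (by linarith)]
    have h1st : (1:ℝ) ^ (st - 1 + 1) / (st - 1 + 1) = 1 / st := by
      rw [sub_add_cancel, Real.one_rpow]
    rw [h1st, ← mul_assoc, ← ENNReal.ofReal_toReal hstop, ← hstdef,
      ← ENNReal.ofReal_mul hst0.le, mul_one_div_cancel hst0.ne', ENNReal.ofReal_one, one_mul,
      ← ENNReal.rpow_mul]
    congr 1
    field_simp

lemma distribFn_antitone {X : Type*} [MeasurableSpace X] (μ : Measure X) (f : X → ℂ) :
    Antitone (distribFn μ f) :=
  fun a b hab => measure_mono fun x hx => lt_of_le_of_lt hab hx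

lemma distribFn_measurable {X : Type*} [MeasurableSpace X] (μ : Measure X) (f : X → ℂ) :
    Measurable (distribFn μ f) :=
  (distribFn_antitone μ f).measurable

/-- The weak (`q = ∞`) Lorentz norm is dominated by any `L_{r,q}` norm with `1 ≤ q`. -/
lemma lorentzNorm_top_le {Y : Type*} [MeasurableSpace Y] (ν : Measure Y) {r : ℝ}
    (hr : 0 < r) {q : ℝ≥0∞} (hq : 1 ≤ q) (f : Y → ℂ) :
    lorentzNorm ν r ∞ f ≤ lorentzNorm ν r q f := by
  by_cases hqtop : q = ∞
  · rw [hqtop]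
  rw [lorentzNorm, if_pos rfl, lorentzNorm, if_neg hqtop]
  set qt := q.toReal with hqt
  have hqt1 : (1:ℝ) ≤ qt := by
    rw [hqt, ← ENNReal.toReal_one]; exact ENNReal.toReal_mono hqtop hq
  have hqt0 : (0:ℝ) < qt := by linarith
  refine iSup₂_le fun lam0 hlam0 => ?_
  have hlam0' : (0:ℝ) < lam0 := hlam0
  set d := distribFn ν f with hd
  set c := d lam0 ^ (qt / r) with hc
  -- key : (ofReal lam0 * d lam0 ^ (1/r)) ^ qt ≤ q * ∫ ...
  have key : (ENNReal.ofReal lam0 * d lam0 ^ (1/r)) ^ qt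
      ≤ q * ∫⁻ lam in Set.Ioi (0:ℝ),
          (ENNReal.ofReal lam * d lam ^ (1/r)) ^ qt / ENNReal.ofReal lam := by
    have step1 : ∫⁻ lam in Set.Ioc (0:ℝ) lam0, ENNReal.ofReal lam ^ (qt - 1) * c
        ≤ ∫⁻ lam in Set.Ioi (0:ℝ),
          (ENNReal.ofReal lam * d lam ^ (1/r)) ^ qt / ENNReal.ofReal lam := by
      refine le_trans ?_ (lintegral_mono_set (Set.Ioc_subset_Ioi_self : Set.Ioc (0:ℝ) lam0 ⊆ Set.Ioi 0))
      refine setLIntegral_mono' measurableSet_Ioc fun lam hlam => ?_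
      have hne0 : ENNReal.ofReal lam ≠ 0 := by
        simp [ENNReal.ofReal_eq_zero, not_le, hlam.1]
      have hdiv : ENNReal.ofReal lam ^ qt / ENNReal.ofReal lam
          = ENNReal.ofReal lam ^ (qt - 1) := by
        rw [ENNReal.rpow_sub _ _ hne0 ENNReal.ofReal_ne_top, ENNReal.rpow_one]
      calc ENNReal.ofReal lam ^ (qt - 1) * c
          = ENNReal.ofReal lam ^ qt / ENNReal.ofReal lam * c := by rw [hdiv]
        _ = ENNReal.ofReal lam ^ qt * c / ENNReal.ofReal lam := by
            rw [div_eq_mul_inv, div_eq_mul_inv, mul_right_comm]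
        _ ≤ ENNReal.ofReal lam ^ qt * (d lam ^ (qt / r)) / ENNReal.ofReal lam := by
            gcongr
            rw [hc]
            exact ENNReal.rpow_le_rpow (distribFn_antitone ν f hlam.2) (by positivity)
        _ = (ENNReal.ofReal lam * d lam ^ (1/r)) ^ qt / ENNReal.ofReal lam := by
            rw [ENNReal.mul_rpow_of_nonneg _ _ hqt0.le, ← ENNReal.rpow_mul,
              show (1/r) * qt = qt/r by ring]
    have step2 : ∫⁻ lam in Set.Ioc (0:ℝ) lam0, ENNReal.ofReal lam ^ (qt - 1) * c
        = ENNReal.ofReal (lam0 ^ qt / qt) * c := by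
      rw [lintegral_mul_const _ (ENNReal.measurable_ofReal.pow_const _),
        aux_lintegral_rpow hlam0' (by linarith), sub_add_cancel]
    calc (ENNReal.ofReal lam0 * d lam0 ^ (1/r)) ^ qt
        = ENNReal.ofReal lam0 ^ qt * c := by
          rw [ENNReal.mul_rpow_of_nonneg _ _ hqt0.le, ← ENNReal.rpow_mul,
            show (1/r) * qt = qt/r by ring, hc]
      _ = q * (ENNReal.ofReal (lam0 ^ qt / qt) * c) := by
          rw [← mul_assoc, ← ENNReal.ofReal_toReal hqtop, ← hqt,
            ← ENNReal.ofReal_mul hqt0.le, mul_div_cancel₀ _ hqt0.ne',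
            ENNReal.ofReal_rpow_of_pos hlam0']
      _ = q * ∫⁻ lam in Set.Ioc (0:ℝ) lam0, ENNReal.ofReal lam ^ (qt - 1) * c := by
          rw [step2]
      _ ≤ _ := by gcongr
  calc ENNReal.ofReal lam0 * d lam0 ^ (1/r)
      = ((ENNReal.ofReal lam0 * d lam0 ^ (1/r)) ^ qt) ^ (1/qt) := by
        rw [← ENNReal.rpow_mul, mul_one_div_cancel hqt0.ne', ENNReal.rpow_one]
    _ ≤ _ := ENNReal.rpow_le_rpow key (by positivity)

/-- Comparison of Lorentz norms from a pointwise comparison of distribution functions. -/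
lemma lorentzNorm_mul_le_of_distrib {X Y : Type*} [MeasurableSpace X] [MeasurableSpace Y]
    (μ : Measure X) (ν : Measure Y) {p r : ℝ} (hp : 0 < p) (hr : 0 < r)
    {q : ℝ≥0∞} (hq : 1 ≤ q) (g : X → ℂ) (f : Y → ℂ) (k : ℝ≥0)
    (h : ∀ lam : ℝ, 0 < lam →
      (k : ℝ≥0∞) * (distribFn ν f lam) ^ (1/r) ≤ (distribFn μ g lam) ^ (1/p)) :
    (k : ℝ≥0∞) * lorentzNorm ν r q f ≤ lorentzNorm μ p q g := by
  by_cases hqtop : q = ∞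
  · rw [hqtop, lorentzNorm, if_pos rfl, lorentzNorm, if_pos rfl, ENNReal.mul_iSup]
    refine iSup_le fun lam => ?_
    rw [ENNReal.mul_iSup]
    refine iSup_le fun hlam => ?_
    refine le_iSup₂_of_le lam hlam ?_
    calc (k : ℝ≥0∞) * (ENNReal.ofReal lam * distribFn ν f lam ^ (1/r))
        = ENNReal.ofReal lam * ((k:ℝ≥0∞) * distribFn ν f lam ^ (1/r)) := by ring
      _ ≤ ENNReal.ofReal lam * distribFn μ g lam ^ (1/p) := by
          gcongr
          exact h lam hlam
  · rw [lorentzNorm, if_neg hqtop, lorentzNorm, if_neg hqtop]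
    set qt := q.toReal with hqt
    have hqt1 : (1:ℝ) ≤ qt := by
      rw [hqt, ← ENNReal.toReal_one]; exact ENNReal.toReal_mono hqtop hq
    have hqt0 : (0:ℝ) < qt := by linarith
    have key : (k:ℝ≥0∞) ^ qt * (q * ∫⁻ lam in Set.Ioi (0:ℝ),
          (ENNReal.ofReal lam * distribFn ν f lam ^ (1/r)) ^ qt / ENNReal.ofReal lam)
        ≤ q * ∫⁻ lam in Set.Ioi (0:ℝ),
          (ENNReal.ofReal lam * distribFn μ g lam ^ (1/p)) ^ qt / ENNReal.ofReal lam := by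
      rw [← mul_assoc, mul_comm ((k:ℝ≥0∞) ^ qt) q, mul_assoc]
      gcongr
      rw [← lintegral_const_mul' _ _ (ENNReal.rpow_lt_top_of_nonneg hqt0.le ENNReal.coe_ne_top).ne]
      refine setLIntegral_mono' measurableSet_Ioi fun lam hlam => ?_
      calc (k:ℝ≥0∞) ^ qt * ((ENNReal.ofReal lam * distribFn ν f lam ^ (1/r)) ^ qt
            / ENNReal.ofReal lam)
          = ((k:ℝ≥0∞) * (ENNReal.ofReal lam * distribFn ν f lam ^ (1/r))) ^ qt
            / ENNReal.ofReal lam := by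
            rw [ENNReal.mul_rpow_of_nonneg ((k:ℝ≥0∞))
              (ENNReal.ofReal lam * distribFn ν f lam ^ (1/r)) hqt0.le, mul_div_assoc]
        _ ≤ (ENNReal.ofReal lam * distribFn μ g lam ^ (1/p)) ^ qt / ENNReal.ofReal lam := by
            refine ENNReal.div_le_div_right (ENNReal.rpow_le_rpow ?_ hqt0.le) _
            calc (k:ℝ≥0∞) * (ENNReal.ofReal lam * distribFn ν f lam ^ (1/r))
                = ENNReal.ofReal lam * ((k:ℝ≥0∞) * distribFn ν f lam ^ (1/r)) := by ring
              _ ≤ _ := by gcongr; exact h lam hlam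
    calc (k:ℝ≥0∞) * (q * ∫⁻ lam in Set.Ioi (0:ℝ),
          (ENNReal.ofReal lam * distribFn ν f lam ^ (1/r)) ^ qt / ENNReal.ofReal lam) ^ (1/qt)
        = ((k:ℝ≥0∞) ^ qt * (q * ∫⁻ lam in Set.Ioi (0:ℝ),
            (ENNReal.ofReal lam * distribFn ν f lam ^ (1/r)) ^ qt
              / ENNReal.ofReal lam)) ^ (1/qt) := by
          rw [ENNReal.mul_rpow_of_nonneg ((k:ℝ≥0∞)^qt) _ (by positivity : (0:ℝ) ≤ 1/qt),
            ← ENNReal.rpow_mul (k:ℝ≥0∞), mul_one_div_cancel hqt0.ne', ENNReal.rpow_one]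
      _ ≤ _ := ENNReal.rpow_le_rpow key (by positivity)

/-- Monotonicity of the Lorentz norm in the second index, with constant. -/
lemma lorentzNorm_le_of_le {Y : Type*} [MeasurableSpace Y] (ν : Measure Y) {r : ℝ}
    (hr : 0 < r) {q s : ℝ≥0∞} (hq : 1 ≤ q) (hqs : q ≤ s) (hstop : s ≠ ∞) (f : Y → ℂ) :
    lorentzNorm ν r s f
      ≤ (s * q⁻¹) ^ (1 / s.toReal) * lorentzNorm ν r q f := by
  have hqtop : q ≠ ∞ := fun h => hstop (top_le_iff.1 (h ▸ hqs))
  set st := s.toReal with hst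
  set qt := q.toReal with hqtdef
  have hq0 : q ≠ 0 := fun h => by simp [h] at hq
  have hqt1 : (1:ℝ) ≤ qt := by
    rw [hqtdef, ← ENNReal.toReal_one]; exact ENNReal.toReal_mono hqtop hq
  have hqt0 : (0:ℝ) < qt := by linarith
  have hst1 : (1:ℝ) ≤ st := by
    rw [hst, ← ENNReal.toReal_one]; exact ENNReal.toReal_mono hstop (le_trans hq hqs)
  have hst0 : (0:ℝ) < st := by linarith
  have hqtst : qt ≤ st := ENNReal.toReal_mono hstop hqs
  set N := lorentzNorm ν r q f with hN
  set C := (s * q⁻¹) ^ (1 / st) with hC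
  have hC0 : C ≠ 0 := by
    rw [hC]
    refine (ENNReal.rpow_pos ?_ ?_).ne'
    · exact ENNReal.mul_pos (fun h => hq0 (le_antisymm (h ▸ hqs) (zero_le : (0:ℝ≥0∞) ≤ q)))
        (ENNReal.inv_ne_zero.2 hqtop)
    · exact ENNReal.mul_ne_top hstop (ENNReal.inv_ne_top.2 hq0)
  by_cases hNtop : N = ∞
  · rw [hNtop, ENNReal.mul_top hC0]; exact le_top
  -- N finite
  have hM : lorentzNorm ν r ∞ f ≤ N := lorentzNorm_top_le ν hr hq f
  rw [lorentzNorm, if_neg hstop]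
  set d := distribFn ν f with hd
  set Iq := ∫⁻ lam in Set.Ioi (0:ℝ),
      (ENNReal.ofReal lam * d lam ^ (1/r)) ^ qt / ENNReal.ofReal lam with hIq
  have hqIq : q * Iq = N ^ qt := by
    rw [hN, lorentzNorm, if_neg hqtop, ← ENNReal.rpow_mul, one_div_mul_cancel hqt0.ne',
      ENNReal.rpow_one]
  have hptwise : ∀ lam ∈ Set.Ioi (0:ℝ),
      (ENNReal.ofReal lam * d lam ^ (1/r)) ^ st / ENNReal.ofReal lam
        ≤ (ENNReal.ofReal lam * d lam ^ (1/r)) ^ qt / ENNReal.ofReal lam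
          * N ^ (st - qt) := by
    intro lam hlam
    have ha : ENNReal.ofReal lam * d lam ^ (1/r) ≤ N := by
      refine le_trans ?_ hM
      rw [lorentzNorm, if_pos rfl]
      exact le_iSup₂_of_le lam hlam le_rfl
    calc (ENNReal.ofReal lam * d lam ^ (1/r)) ^ st / ENNReal.ofReal lam
        = (ENNReal.ofReal lam * d lam ^ (1/r)) ^ qt
          * (ENNReal.ofReal lam * d lam ^ (1/r)) ^ (st - qt) / ENNReal.ofReal lam := by
          rw [← ENNReal.rpow_add_of_nonneg _ _ hqt0.le (by linarith), add_sub_cancel]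
      _ = (ENNReal.ofReal lam * d lam ^ (1/r)) ^ qt / ENNReal.ofReal lam
          * (ENNReal.ofReal lam * d lam ^ (1/r)) ^ (st - qt) := by
          simp only [div_eq_mul_inv]; ring
      _ ≤ _ := mul_le_mul_right (ENNReal.rpow_le_rpow ha (by linarith)) _
  calc (s * ∫⁻ lam in Set.Ioi (0:ℝ),
        (ENNReal.ofReal lam * d lam ^ (1/r)) ^ st / ENNReal.ofReal lam) ^ (1/st)
      ≤ (s * ∫⁻ lam in Set.Ioi (0:ℝ),
          ((ENNReal.ofReal lam * d lam ^ (1/r)) ^ qt / ENNReal.ofReal lam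
            * N ^ (st - qt))) ^ (1/st) :=
        ENNReal.rpow_le_rpow
          (mul_le_mul_right (setLIntegral_mono' measurableSet_Ioi hptwise) s)
          (by positivity)
    _ = (s * (Iq * N ^ (st - qt))) ^ (1/st) := by
        rw [lintegral_mul_const' _ _
          (ENNReal.rpow_lt_top_of_nonneg (by linarith) hNtop).ne, hIq]
    _ = ((s * q⁻¹) * (N ^ qt * N ^ (st - qt))) ^ (1/st) := by
        congr 1
        rw [← hqIq, show s * q⁻¹ * (q * Iq * N ^ (st - qt))
            = (q⁻¹ * q) * (s * (Iq * N ^ (st - qt))) from by ring,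
          ENNReal.inv_mul_cancel hq0 hqtop, one_mul]
    _ = ((s * q⁻¹) * N ^ st) ^ (1/st) := by
        rw [← ENNReal.rpow_add_of_nonneg _ _ hqt0.le (by linarith), add_sub_cancel]
    _ = C * N := by
        rw [ENNReal.mul_rpow_of_nonneg _ _ (by positivity), hC, ← ENNReal.rpow_mul,
          mul_one_div_cancel hst0.ne', ENNReal.rpow_one]

/-- For a mapping with the Luzin `N⁻¹`-property inducing a composition
operator `C_φ : L_{r,s}(Y) → L_{p,q}(X)` with `q ≤ s`, the operator is bounded below iff
`∫_B J_{φ⁻¹} dν ≥ k^p (ν B)^{p/r}` for all measurable `B` and some `k > 0`. -/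
theorem boundedBelowCompositionOperator_iff
    {X Y : Type*} [MeasurableSpace X] [MeasurableSpace Y]
    (μ : Measure X) (ν : Measure Y) [SigmaFinite μ] [SigmaFinite ν]
    (φ : X → Y) (hφ : Measurable φ)
    (hN : ∀ S : Set Y, MeasurableSet S → ν S = 0 → μ (φ ⁻¹' S) = 0)
    (p r : ℝ) (hp : 1 < p) (hr : 1 < r)
    (s q : ℝ≥0∞) (hq : 1 ≤ q) (hqs : q ≤ s)
    (J : Y → ℝ≥0∞) (hJmeas : Measurable J)
    (hJ : ∀ E : Set Y, MeasurableSet E → μ (φ ⁻¹' E) = ∫⁻ y in E, J y ∂ν)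
    (hcomp : ∀ f : Y → ℂ, MemLorentz ν r s f → MemLorentz μ p q (f ∘ φ)) :
    (∃ k : ℝ≥0, 0 < k ∧ ∀ f : Y → ℂ, MemLorentz ν r s f →
        (k : ℝ≥0∞) * lorentzNorm ν r s f ≤ lorentzNorm μ p q (f ∘ φ)) ↔
      (∃ k : ℝ≥0, 0 < k ∧ ∀ B : Set Y, MeasurableSet B →
        (k : ℝ≥0∞) ^ p * (ν B) ^ (p / r) ≤ ∫⁻ y in B, J y ∂ν) := by
  have hp0 : (0:ℝ) < p := by linarith
  have hr0 : (0:ℝ) < r := by linarith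
  have hs1 : (1:ℝ≥0∞) ≤ s := le_trans hq hqs
  constructor
  · rintro ⟨k, hk, hbdd⟩
    refine ⟨k, hk, fun B hB => ?_⟩
    have hk0 : (k:ℝ≥0∞) ≠ 0 := by exact_mod_cast hk.ne'
    -- first the finite-measure case
    have hfin : ∀ B : Set Y, MeasurableSet B → ν B ≠ ∞ →
        (k : ℝ≥0∞) ^ p * (ν B) ^ (p / r) ≤ ∫⁻ y in B, J y ∂ν := by
      intro B hB hBfin
      set f : Y → ℂ := B.indicator fun _ => 1 with hf
      have hmem : MemLorentz ν r s f := by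
        constructor
        · exact measurable_const.indicator hB
        · rw [hf, lorentzNorm_indicator ν B hr hs1]
          exact ENNReal.rpow_lt_top_of_nonneg (by positivity) hBfin
      have hcompind : f ∘ φ = (φ ⁻¹' B).indicator fun _ => (1:ℂ) := by
        ext x
        by_cases h : φ x ∈ B <;> simp [hf, Set.indicator_apply, h]
      have h1 := hbdd f hmem
      rw [hf, lorentzNorm_indicator ν B hr hs1] at h1
      rw [← hf, hcompind, lorentzNorm_indicator μ (φ ⁻¹' B) hp hq,
        hJ B hB] at h1
      -- h1 : k * (ν B)^(1/r) ≤ (∫_B J)^(1/p)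
      have h2 := ENNReal.rpow_le_rpow h1 hp0.le
      rw [ENNReal.mul_rpow_of_nonneg _ _ hp0.le, ← ENNReal.rpow_mul (ν B),
        show (1/r) * p = p/r by ring, ← ENNReal.rpow_mul, one_div_mul_cancel hp0.ne',
        ENNReal.rpow_one] at h2
      exact h2
    by_cases hBfin : ν B ≠ ∞
    · exact hfin B hB hBfin
    -- infinite measure case
    push_neg at hBfin
    have hint : ∫⁻ y in B, J y ∂ν = ∞ := by
      by_contra hI
      set C := ∫⁻ y in B, J y ∂ν with hCdef
      have hbound : ∀ n : ℕ, ν (B ∩ spanningSets ν n)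
          ≤ ((C / (k:ℝ≥0∞) ^ p) ^ (r / p)) := by
        intro n
        have hBn : MeasurableSet (B ∩ spanningSets ν n) :=
          hB.inter (measurableSet_spanningSets ν n)
        have hBnfin : ν (B ∩ spanningSets ν n) ≠ ∞ :=
          ((measure_mono Set.inter_subset_right).trans_lt
            (measure_spanningSets_lt_top ν n)).ne
        have h3 := hfin _ hBn hBnfin
        have h4 : (ν (B ∩ spanningSets ν n)) ^ (p/r) ≤ C / (k:ℝ≥0∞) ^ p := by
          rw [ENNReal.le_div_iff_mul_le (Or.inl (by
              exact ENNReal.rpow_pos (by exact_mod_cast hk) ENNReal.coe_ne_top |>.ne'))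
            (Or.inl (ENNReal.rpow_lt_top_of_nonneg hp0.le ENNReal.coe_ne_top).ne),
            mul_comm]
          exact le_trans h3 (lintegral_mono_set Set.inter_subset_left)
        have h5 := ENNReal.rpow_le_rpow h4 (by positivity : (0:ℝ) ≤ r/p)
        rwa [← ENNReal.rpow_mul, show (p/r) * (r/p) = 1 by field_simp, ENNReal.rpow_one] at h5
      have hsup : ν B = ⨆ n, ν (B ∩ spanningSets ν n) := by
        conv_lhs => rw [show B = ⋃ n, B ∩ spanningSets ν n by
          rw [← Set.inter_iUnion, iUnion_spanningSets, Set.inter_univ]]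
        exact Directed.measure_iUnion ((directed_of_isDirected_le
          (fun i j h => Set.inter_subset_inter_right B (monotone_spanningSets ν h))))
      have : ν B ≤ (C / (k:ℝ≥0∞) ^ p) ^ (r / p) := by
        rw [hsup]; exact iSup_le hbound
      have hfin2 : ν B < ∞ :=
        lt_of_le_of_lt this (ENNReal.rpow_lt_top_of_nonneg (by positivity)
          (by
            refine ENNReal.div_lt_top hI ?_ |>.ne
            exact (ENNReal.rpow_pos (by exact_mod_cast hk) ENNReal.coe_ne_top).ne'))
      exact absurd hBfin hfin2.ne
    rw [hint]
    exact le_top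
  · rintro ⟨k, hk, hset⟩
    have hk0 : (k:ℝ≥0∞) ≠ 0 := by exact_mod_cast hk.ne'
    -- the key distribution-function inequality
    have hdist : ∀ (f : Y → ℂ), Measurable f → ∀ lam : ℝ, 0 < lam →
        (k : ℝ≥0∞) * (distribFn ν f lam) ^ (1/r)
          ≤ (distribFn μ (f ∘ φ) lam) ^ (1/p) := by
      intro f hf lam _
      have hE : MeasurableSet {y | lam < ‖f y‖} :=
        measurableSet_lt measurable_const hf.norm
      have hDg : distribFn μ (f ∘ φ) lam = ∫⁻ y in {y | lam < ‖f y‖}, J y ∂ν := by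
        rw [distribFn, show {x | lam < ‖(f ∘ φ) x‖}
            = φ ⁻¹' {y | lam < ‖f y‖} from rfl, hJ _ hE]
      have h6 : (k : ℝ≥0∞) ^ p * (distribFn ν f lam) ^ (p / r)
          ≤ distribFn μ (f ∘ φ) lam := by
        rw [hDg]; exact hset _ hE
      have h7 := ENNReal.rpow_le_rpow h6 (by positivity : (0:ℝ) ≤ 1/p)
      rw [ENNReal.mul_rpow_of_nonneg _ _ (by positivity), ← ENNReal.rpow_mul,
        one_div, mul_inv_cancel₀ hp0.ne', ENNReal.rpow_one, ← ENNReal.rpow_mul,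
        show (p/r) * p⁻¹ = 1/r by field_simp] at h7
      rw [one_div p, one_div r] at *
      exact h7
    have hmain : ∀ f : Y → ℂ, Measurable f →
        (k : ℝ≥0∞) * lorentzNorm ν r q f ≤ lorentzNorm μ p q (f ∘ φ) := fun f hf =>
      lorentzNorm_mul_le_of_distrib μ ν hp0 hr0 hq (f ∘ φ) f k (hdist f hf)
    by_cases hstop : s = ∞
    · refine ⟨k, hk, fun f hmem => ?_⟩
      calc (k:ℝ≥0∞) * lorentzNorm ν r s f
          ≤ (k:ℝ≥0∞) * lorentzNorm ν r q f := by
            gcongr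
            rw [hstop]
            exact lorentzNorm_top_le ν hr0 hq f
        _ ≤ _ := hmain f hmem.1
    · set C := (s * q⁻¹) ^ (1 / s.toReal) with hC
      have hqtop : q ≠ ∞ := fun h => hstop (top_le_iff.1 (h ▸ hqs))
      have hq0 : q ≠ 0 := fun h => by simp [h] at hq
      have hC0 : C ≠ 0 := by
        rw [hC]
        refine (ENNReal.rpow_pos (ENNReal.mul_pos ?_ (ENNReal.inv_ne_zero.2 hqtop)) ?_).ne'
        · exact fun h => hq0 (le_antisymm (h ▸ hqs) (zero_le : (0:ℝ≥0∞) ≤ q))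
        · exact ENNReal.mul_ne_top hstop (ENNReal.inv_ne_top.2 hq0)
      have hCtop : C ≠ ∞ := by
        rw [hC]
        exact (ENNReal.rpow_lt_top_of_nonneg (by positivity)
          (ENNReal.mul_ne_top hstop (ENNReal.inv_ne_top.2 hq0))).ne
      set Cn := C.toNNReal with hCn
      have hCn0 : Cn ≠ 0 := by
        simp [hCn, ENNReal.toNNReal_eq_zero_iff, hC0, hCtop]
      refine ⟨k / Cn, ?_, fun f hmem => ?_⟩
      · exact div_pos hk (pos_iff_ne_zero.2 hCn0)
      calc (↑(k / Cn) : ℝ≥0∞) * lorentzNorm ν r s f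
          ≤ (↑(k / Cn) : ℝ≥0∞) * (C * lorentzNorm ν r q f) := by
            gcongr
            exact lorentzNorm_le_of_le ν hr0 hq hqs hstop f
        _ = (k:ℝ≥0∞) * lorentzNorm ν r q f := by
            rw [ENNReal.coe_div hCn0, hCn, ENNReal.coe_toNNReal hCtop, ← mul_assoc,
              ENNReal.div_mul_cancel hC0 hCtop]
        _ ≤ _ := hmain f hmem.1
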